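/- arXiv:1407.0134 — 3 statements merged into one kernel-verified Lean document; each statement's English description precedes it below -/
import Mathlib

section
/- Let T₁,T₂ > 0 and H₁,H₂ ∈ (0,1). Equip T = [0,T₁]×[0,T₂] with the metric ρ₂(t,s) = |t₁−s₁|^{H₁} + |t₂−s₂|^{H₂}. Set K₁ = (H₂/(H₁+H₂))^{1/H₁} and K₂ = (H₁/(H₁+H₂))^{1/H₂}. Then for every u > 0 the minimal number N(u) of closed ρ₂-balls of radius u needed to cover T satisfies N(u) ≤ 2·(T₁/(4K₁u^{1/H₁}) + 3/2)·(T₂/(4K₂u^{1/H₂}) + 3/2). -/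
/-- For any point `(p,q)` in `[0,x] × [0,y]` there is an even-parity lattice point
`(i,j)` with small coordinates that is within ℓ¹-distance 1. -/
lemma exists_lattice_pt (x y p q : ℝ) (hp0 : 0 ≤ p) (hpx : p ≤ x) (hq0 : 0 ≤ q)
    (hqy : q ≤ y) :
    ∃ i j : ℤ, 0 ≤ i ∧ i ≤ ⌊x⌋ + 1 ∧ 0 ≤ j ∧ j ≤ ⌊y⌋ + 1 ∧ Even (i + j) ∧
      |p - i| + |q - j| ≤ 1 := by
  set i₀ := ⌊p + 1/2⌋ with hi₀
  set j₀ := ⌊q + 1/2⌋ with hj₀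
  have hi₀0 : 0 ≤ i₀ := Int.le_floor.2 (by push_cast; linarith)
  have hj₀0 : 0 ≤ j₀ := Int.le_floor.2 (by push_cast; linarith)
  have hi₀le : (i₀ : ℝ) ≤ p + 1/2 := Int.floor_le _
  have hi₀gt : p + 1/2 < i₀ + 1 := Int.lt_floor_add_one _
  have hj₀le : (j₀ : ℝ) ≤ q + 1/2 := Int.floor_le _
  have hj₀gt : q + 1/2 < j₀ + 1 := Int.lt_floor_add_one _
  have habsi : |p - i₀| ≤ 1/2 := abs_le.2 ⟨by linarith, by linarith⟩
  have habsj : |q - j₀| ≤ 1/2 := abs_le.2 ⟨by linarith, by linarith⟩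
  have hxfl : x < ⌊x⌋ + 1 := Int.lt_floor_add_one x
  have hyfl : y < ⌊y⌋ + 1 := Int.lt_floor_add_one y
  have hi₀x : i₀ ≤ ⌊x⌋ + 1 := by
    have h2 : (i₀ : ℝ) < (⌊x⌋ : ℝ) + 2 := by linarith
    have h3 : i₀ < ⌊x⌋ + 2 := by exact_mod_cast h2
    omega
  have hj₀y : j₀ ≤ ⌊y⌋ + 1 := by
    have h2 : (j₀ : ℝ) < (⌊y⌋ : ℝ) + 2 := by linarith
    have h3 : j₀ < ⌊y⌋ + 2 := by exact_mod_cast h2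
    omega
  rcases Int.even_or_odd (i₀ + j₀) with hpar | hpar
  · exact ⟨i₀, j₀, hi₀0, hi₀x, hj₀0, hj₀y, hpar, by linarith⟩
  · obtain ⟨k, hk⟩ := hpar
    by_cases hst : |q - j₀| ≤ |p - i₀|
    · -- adjust i
      by_cases hpi : (i₀ : ℝ) ≤ p
      · have hile : i₀ ≤ ⌊x⌋ := Int.le_floor.2 (le_trans hpi hpx)
        have habs' : |p - (i₀ : ℝ)| = p - i₀ := abs_of_nonneg (by linarith)
        have habs'' : |p - ((i₀ : ℤ) + 1 : ℤ)| = 1 - (p - i₀) := by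
          push_cast
          rw [abs_of_nonpos (by linarith)]; ring
        refine ⟨i₀ + 1, j₀, by omega, by omega, hj₀0, hj₀y, ⟨k + 1, by omega⟩, ?_⟩
        rw [habs'']
        linarith [habs' ▸ hst]
      · push_neg at hpi
        have hi₀1 : 1 ≤ i₀ := by
          have : (0 : ℝ) < i₀ := lt_of_le_of_lt hp0 hpi
          exact_mod_cast this
        have habs' : |p - (i₀ : ℝ)| = (i₀ : ℝ) - p := by
          rw [abs_of_nonpos (by linarith)]; ring
        have habs'' : |p - ((i₀ : ℤ) - 1 : ℤ)| = 1 - ((i₀ : ℝ) - p) := by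
          push_cast
          rw [abs_of_nonneg (by
            have : (i₀ : ℝ) - p ≤ 1/2 := by rw [← habs']; exact habsi
            linarith)]
          ring
        refine ⟨i₀ - 1, j₀, by omega, by omega, hj₀0, hj₀y, ⟨k, by omega⟩, ?_⟩
        rw [habs'']
        linarith [habs' ▸ hst]
    · push_neg at hst
      by_cases hqj : (j₀ : ℝ) ≤ q
      · have hjle : j₀ ≤ ⌊y⌋ := Int.le_floor.2 (le_trans hqj hqy)
        have habs' : |q - (j₀ : ℝ)| = q - j₀ := abs_of_nonneg (by linarith)
        have habs'' : |q - ((j₀ : ℤ) + 1 : ℤ)| = 1 - (q - j₀) := by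
          push_cast
          rw [abs_of_nonpos (by linarith)]; ring
        refine ⟨i₀, j₀ + 1, hi₀0, hi₀x, by omega, by omega, ⟨k + 1, by omega⟩, ?_⟩
        rw [habs'']
        have := habs' ▸ hst.le
        linarith
      · push_neg at hqj
        have hj₀1 : 1 ≤ j₀ := by
          have : (0 : ℝ) < j₀ := lt_of_le_of_lt hq0 hqj
          exact_mod_cast this
        have habs' : |q - (j₀ : ℝ)| = (j₀ : ℝ) - q := by
          rw [abs_of_nonpos (by linarith)]; ring
        have habs'' : |q - ((j₀ : ℤ) - 1 : ℤ)| = 1 - ((j₀ : ℝ) - q) := by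
          push_cast
          rw [abs_of_nonneg (by
            have : (j₀ : ℝ) - q ≤ 1/2 := by rw [← habs']; exact habsj
            linarith)]
          ring
        refine ⟨i₀, j₀ - 1, hi₀0, hi₀x, by omega, by omega, ⟨k, by omega⟩, ?_⟩
        rw [habs'']
        have := habs' ▸ hst.le
        linarith

/-- Key analytic estimate for one coordinate. -/
lemma rpow_piece (H lam u s : ℝ) (hH0 : 0 < H) (hH1 : H < 1) (hlam : 0 < lam)
    (hu : 0 < u) (hs : 0 ≤ s) :
    (2 * lam ^ (1/H) * u ^ (1/H) * s) ^ H ≤ (2 * H * s + (1 - H)) * (lam * u) := by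
  have h1 : 2 * lam ^ (1/H) * u ^ (1/H) * s = (2*s) * (lam ^ (1/H) * u ^ (1/H)) := by ring
  have hlu : (0:ℝ) ≤ lam ^ (1/H) * u ^ (1/H) := by positivity
  have h2s : (0:ℝ) ≤ 2*s := by positivity
  have hl : (0:ℝ) ≤ lam ^ (1/H) := (Real.rpow_pos_of_pos hlam _).le
  have hur : (0:ℝ) ≤ u ^ (1/H) := (Real.rpow_pos_of_pos hu _).le
  rw [h1, Real.mul_rpow h2s hlu, Real.mul_rpow hl hur,
    ← Real.rpow_mul hlam.le, ← Real.rpow_mul hu.le,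
    one_div_mul_cancel hH0.ne', Real.rpow_one, Real.rpow_one]
  have hgm : (2*s) ^ H ≤ H * (2*s) + (1 - H) := by
    have := Real.geom_mean_le_arith_mean2_weighted hH0.le (by linarith : (0:ℝ) ≤ 1 - H)
      (by positivity : (0:ℝ) ≤ 2*s) zero_le_one (by ring)
    simpa [Real.one_rpow] using this
  have hmul : (2*s) ^ H * (lam * u) ≤ (H * (2*s) + (1 - H)) * (lam * u) :=
    mul_le_mul_of_nonneg_right hgm (by positivity)
  refine le_trans (le_of_eq (by ring)) (le_trans hmul (le_of_eq (by ring)))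

set_option maxHeartbeats 1000000 in
theorem stmt5 (T₁ T₂ H₁ H₂ : ℝ) (hT₁ : 0 < T₁) (hT₂ : 0 < T₂)
    (hH₁ : H₁ ∈ Set.Ioo (0:ℝ) 1) (hH₂ : H₂ ∈ Set.Ioo (0:ℝ) 1)
    (u : ℝ) (hu : 0 < u) :
    ∃ F : Finset (ℝ × ℝ),
      (Set.Icc 0 T₁ ×ˢ Set.Icc 0 T₂ ⊆
        ⋃ c ∈ F, {x : ℝ × ℝ | |x.1 - c.1| ^ H₁ + |x.2 - c.2| ^ H₂ ≤ u}) ∧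
      (F.card : ℝ) ≤
        2 * (T₁ / (4 * (H₂ / (H₁ + H₂)) ^ (1 / H₁) * u ^ (1 / H₁)) + 3 / 2)
          * (T₂ / (4 * (H₁ / (H₁ + H₂)) ^ (1 / H₂) * u ^ (1 / H₂)) + 3 / 2) := by
  obtain ⟨hH₁0, hH₁1⟩ := hH₁
  obtain ⟨hH₂0, hH₂1⟩ := hH₂
  have hsum : 0 < H₁ + H₂ := by linarith
  set lam := H₂ / (H₁ + H₂) with hlam
  have hlam0 : 0 < lam := by positivity
  have h1lam : 1 - lam = H₁ / (H₁ + H₂) := by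
    rw [hlam]; field_simp; ring
  have h1lam0 : 0 < 1 - lam := by rw [h1lam]; positivity
  have hmu : lam * H₁ = (1 - lam) * H₂ := by
    rw [hlam, h1lam]; field_simp
  clear_value lam
  set a₁ := 2 * lam ^ (1/H₁) * u ^ (1/H₁) with ha₁
  set a₂ := 2 * (1 - lam) ^ (1/H₂) * u ^ (1/H₂) with ha₂
  have ha₁0 : 0 < a₁ := by positivity
  have ha₂0 : 0 < a₂ := by positivity
  clear_value a₁ a₂
  set x := T₁ / a₁ with hx
  set yv := T₂ / a₂ with hyv
  have hx0 : 0 ≤ x := by positivity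
  have hyv0 : 0 ≤ yv := by positivity
  clear_value x yv
  set A := ⌊x⌋ + 1 with hA
  set B := ⌊yv⌋ + 1 with hB
  have hA1 : 1 ≤ A := by
    have : 0 ≤ ⌊x⌋ := Int.floor_nonneg.2 hx0
    omega
  have hB1 : 1 ≤ B := by
    have : 0 ≤ ⌊yv⌋ := Int.floor_nonneg.2 hyv0
    omega
  clear_value A B
  set G : Finset (ℤ × ℤ) :=
    (Finset.Icc 0 A ×ˢ Finset.Icc 0 B).filter (fun ij => Even (ij.1 + ij.2)) with hG
  clear_value G
  refine ⟨G.image (fun ij => ((ij.1 : ℝ) * a₁, (ij.2 : ℝ) * a₂)), ?_, ?_⟩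
  · -- coverage
    rintro ⟨t₁, t₂⟩ ht
    rw [Set.mem_prod] at ht
    obtain ⟨⟨ht₁0, ht₁T⟩, ⟨ht₂0, ht₂T⟩⟩ := ht
    obtain ⟨i, j, hi0, hiA, hj0, hjB, hpar, hdist⟩ :=
      exists_lattice_pt x yv (t₁ / a₁) (t₂ / a₂) (by positivity)
        (by rw [hx]; exact (div_le_div_iff_of_pos_right ha₁0).2 ht₁T) (by positivity)
        (by rw [hyv]; exact (div_le_div_iff_of_pos_right ha₂0).2 ht₂T)
    simp only [Set.mem_iUnion]
    refine ⟨((i : ℝ) * a₁, (j : ℝ) * a₂), ?_, ?_⟩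
    · refine Finset.mem_image.2 ⟨(i, j), ?_, rfl⟩
      rw [hG, Finset.mem_filter, Finset.mem_product, Finset.mem_Icc, Finset.mem_Icc]
      refine ⟨⟨⟨hi0, ?_⟩, ⟨hj0, ?_⟩⟩, hpar⟩
      · rw [hA]; exact hiA
      · rw [hB]; exact hjB
    · show |t₁ - (i : ℝ) * a₁| ^ H₁ + |t₂ - (j : ℝ) * a₂| ^ H₂ ≤ u
      set s := |t₁ / a₁ - (i : ℝ)| with hs
      set t := |t₂ / a₂ - (j : ℝ)| with ht
      have hs0 : 0 ≤ s := abs_nonneg _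
      have ht0 : 0 ≤ t := abs_nonneg _
      have e1 : |t₁ - (i : ℝ) * a₁| = a₁ * s := by
        rw [hs, show t₁ - (i : ℝ) * a₁ = a₁ * (t₁ / a₁ - (i:ℝ)) by field_simp,
          abs_mul, abs_of_pos ha₁0]
      have e2 : |t₂ - (j : ℝ) * a₂| = a₂ * t := by
        rw [ht, show t₂ - (j : ℝ) * a₂ = a₂ * (t₂ / a₂ - (j:ℝ)) by field_simp,
          abs_mul, abs_of_pos ha₂0]
      have hb1 : (a₁ * s) ^ H₁ ≤ (2 * H₁ * s + (1 - H₁)) * (lam * u) := by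
        rw [ha₁]
        exact rpow_piece H₁ lam u s hH₁0 hH₁1 hlam0 hu hs0
      have hb2 : (a₂ * t) ^ H₂ ≤ (2 * H₂ * t + (1 - H₂)) * ((1 - lam) * u) := by
        rw [ha₂]
        exact rpow_piece H₂ (1 - lam) u t hH₂0 hH₂1 h1lam0 hu ht0
      rw [e1, e2]
      refine le_trans (add_le_add hb1 hb2) ?_
      have key : (2 * H₁ * s + (1 - H₁)) * (lam * u) + (2 * H₂ * t + (1 - H₂)) * ((1 - lam) * u)
          = u + 2 * (lam * H₁) * u * (s + t - 1) := by
        linear_combination (u - 2 * t * u) * hmu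
      rw [key]
      nlinarith [mul_pos (mul_pos hlam0 hH₁0) hu]
  · -- cardinality
    have hcard1 : (G.image (fun ij : ℤ × ℤ => ((ij.1 : ℝ) * a₁, (ij.2 : ℝ) * a₂))).card ≤ G.card :=
      Finset.card_image_le
    have hcard2 : G.card ≤ ((Finset.Icc 0 (A/2)) ×ˢ (Finset.Icc 0 B)).card := by
      apply Finset.card_le_card_of_injOn (fun ij => (ij.1 / 2, ij.2))
      · intro ij hij
        rw [hG, Finset.mem_coe, Finset.mem_filter, Finset.mem_product, Finset.mem_Icc, Finset.mem_Icc] at hij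
        rw [Finset.mem_coe, Finset.mem_product, Finset.mem_Icc, Finset.mem_Icc]; beta_reduce
        obtain ⟨⟨⟨h1, h2⟩, h3, h4⟩, _⟩ := hij
        refine ⟨⟨by omega, by omega⟩, h3, h4⟩
      · intro ij₁ h₁ ij₂ h₂ heq
        simp only [hG, Finset.mem_coe, Finset.mem_filter] at h₁ h₂
        have hp₁ := h₁.2
        have hp₂ := h₂.2
        rw [Int.even_iff] at hp₁ hp₂
        simp only [Prod.mk.injEq] at heq
        have : ij₁.2 = ij₂.2 := heq.2
        have h12 : ij₁.1 / 2 = ij₂.1 / 2 := heq.1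
        have : ij₁.1 = ij₂.1 := by omega
        exact Prod.ext ‹ij₁.1 = ij₂.1› ‹ij₁.2 = ij₂.2›
    have hcard3 : (((Finset.Icc (0:ℤ) (A/2)) ×ˢ (Finset.Icc (0:ℤ) B)).card : ℝ)
        ≤ ((A : ℝ)/2 + 1) * ((B : ℝ) + 1) := by
      have hcardZ : ((((Finset.Icc (0:ℤ) (A/2)) ×ˢ (Finset.Icc (0:ℤ) B)).card : ℤ))
          = (A/2 + 1) * (B + 1) := by
        rw [Finset.card_product, Nat.cast_mul, Int.card_Icc, Int.card_Icc,
          Int.toNat_of_nonneg (by omega : (0:ℤ) ≤ A/2 + 1 - 0),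
          Int.toNat_of_nonneg (by omega : (0:ℤ) ≤ B + 1 - 0)]
        ring
      have hcardR : ((((Finset.Icc (0:ℤ) (A/2)) ×ˢ (Finset.Icc (0:ℤ) B)).card : ℝ))
          = (((A/2 : ℤ) : ℝ) + 1) * ((B : ℝ) + 1) := by exact_mod_cast hcardZ
      rw [hcardR]
      have hdiv : ((A/2 : ℤ) : ℝ) ≤ (A : ℝ) / 2 := by
        have h2 : (2:ℤ) * (A / 2) ≤ A := by omega
        have h2' : (2:ℝ) * ((A/2 : ℤ) : ℝ) ≤ (A : ℝ) := by exact_mod_cast h2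
        linarith
      have hBnn : (0:ℝ) ≤ (B : ℝ) + 1 := by
        have : (0:ℤ) ≤ B + 1 := by omega
        exact_mod_cast this
      nlinarith [hdiv, hBnn]
    have hAx : (A : ℝ) ≤ x + 1 := by
      rw [hA]; push_cast
      linarith [Int.floor_le x]
    have hBy : (B : ℝ) ≤ yv + 1 := by
      rw [hB]; push_cast
      linarith [Int.floor_le yv]
    have hchain : ((G.image (fun ij : ℤ × ℤ => ((ij.1 : ℝ) * a₁, (ij.2 : ℝ) * a₂))).card : ℝ)
        ≤ ((A : ℝ)/2 + 1) * ((B : ℝ) + 1) := by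
      calc ((G.image _).card : ℝ) ≤ (G.card : ℝ) := by exact_mod_cast hcard1
        _ ≤ (((Finset.Icc (0:ℤ) (A/2)) ×ˢ (Finset.Icc (0:ℤ) B)).card : ℝ) := by
            exact_mod_cast hcard2
        _ ≤ ((A : ℝ)/2 + 1) * ((B : ℝ) + 1) := hcard3
    have htarget : 2 * (T₁ / (4 * (H₂ / (H₁ + H₂)) ^ (1 / H₁) * u ^ (1 / H₁)) + 3 / 2)
          * (T₂ / (4 * (H₁ / (H₁ + H₂)) ^ (1 / H₂) * u ^ (1 / H₂)) + 3 / 2)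
        = 2 * (x / 2 + 3/2) * (yv / 2 + 3/2) := by
      rw [← hlam, ← h1lam,
        show 4 * lam ^ (1/H₁) * u ^ (1/H₁) = 2 * a₁ from by rw [ha₁]; ring,
        show 4 * (1 - lam) ^ (1/H₂) * u ^ (1/H₂) = 2 * a₂ from by rw [ha₂]; ring,
        hx, hyv]
      ring
    rw [hlam, htarget]
    refine le_trans hchain ?_
    have hA0 : (0:ℝ) ≤ (A : ℝ) := by
      have : (0:ℤ) ≤ A := by omega
      exact_mod_cast this
    have hB0 : (0:ℝ) ≤ (B : ℝ) := by
      have : (0:ℤ) ≤ B := by omega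
      exact_mod_cast this
    have hs1 : (A : ℝ)/2 + 1 ≤ (x + 3)/2 := by linarith
    have hs2 : (B : ℝ) + 1 ≤ yv + 3 := by linarith
    have hs3 : (0:ℝ) ≤ (B : ℝ) + 1 := by linarith
    have hs4 : (0:ℝ) ≤ (x + 3)/2 := by linarith
    have hstep : ((A : ℝ)/2 + 1) * ((B : ℝ) + 1) ≤ (x + 3)/2 * (yv + 3) :=
      mul_le_mul hs1 hs2 hs3 hs4
    calc ((A : ℝ)/2 + 1) * ((B : ℝ) + 1) ≤ (x + 3)/2 * (yv + 3) := hstep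
      _ = 2 * (x / 2 + 3/2) * (yv / 2 + 3/2) := by ring
end

section
/- Let H₁,H₂ ∈ (0,1) and set K₁ = (H₂/(H₁+H₂))^{1/H₁}, K₂ = (H₁/(H₁+H₂))^{1/H₂}, a₁ = 2K₁ε^{1/H₁}, a₂ = 2K₂ε^{1/H₂} for ε > 0. Then the set V = {x ∈ ℝ² : |x₁|/a₁ + |x₂|/a₂ ≤ 1} is contained in the ρ₂-ball {x : |x₁|^{H₁} + |x₂|^{H₂} ≤ ε}. -/
private lemma bern_aux (H t : ℝ) (hH0 : 0 < H) (hH1 : H ≤ 1) (ht : 0 ≤ t) :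
    t ^ H ≤ 1 - H + H * t := by
  have h := Real.geom_mean_le_arith_mean2_weighted hH0.le (by linarith : (0:ℝ) ≤ 1 - H)
    ht zero_le_one (by ring)
  rw [Real.one_rpow, mul_one] at h
  linarith

private lemma pow_split (a ε H : ℝ) (ha : 0 < a) (hε : 0 < ε) (hH : 0 < H) (t : ℝ)
    (ht : 0 ≤ t) :
    (t * (2 * a ^ (1/H) * ε ^ (1/H))) ^ H = (2*t) ^ H * (a * ε) := by
  have key : (2:ℝ) * a ^ (1/H) * ε ^ (1/H) = 2 * (a*ε) ^ (1/H) := by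
    rw [Real.mul_rpow ha.le hε.le]; ring
  rw [key, show t * (2 * (a*ε)^(1/H)) = (2*t) * (a*ε)^(1/H) by ring,
    Real.mul_rpow (by linarith) (by positivity),
    ← Real.rpow_mul (by positivity : (0:ℝ) ≤ a * ε), one_div,
    inv_mul_cancel₀ hH.ne', Real.rpow_one]

theorem stmt6 (H₁ H₂ ε : ℝ)
    (hH₁ : H₁ ∈ Set.Ioo (0:ℝ) 1) (hH₂ : H₂ ∈ Set.Ioo (0:ℝ) 1) (hε : 0 < ε) :
    {x : ℝ × ℝ |
        |x.1| / (2 * (H₂ / (H₁ + H₂)) ^ (1 / H₁) * ε ^ (1 / H₁))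
          + |x.2| / (2 * (H₁ / (H₁ + H₂)) ^ (1 / H₂) * ε ^ (1 / H₂)) ≤ 1}
      ⊆ {x : ℝ × ℝ | |x.1| ^ H₁ + |x.2| ^ H₂ ≤ ε} := by
  obtain ⟨h10, h11⟩ := hH₁
  obtain ⟨h20, h21⟩ := hH₂
  have hs : 0 < H₁ + H₂ := by linarith
  set p := H₂ / (H₁ + H₂) with hp
  set q := H₁ / (H₁ + H₂) with hq
  have hp0 : 0 < p := by positivity
  have hq0 : 0 < q := by positivity
  have hpq : p + q = 1 := by rw [hp, hq, ← add_div, add_comm, div_self hs.ne']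
  have hm : p * H₁ = q * H₂ := by
    rw [hp, hq]; field_simp
  intro x hx
  simp only [Set.mem_setOf_eq] at hx ⊢
  have ha₁ : 0 < 2 * p ^ (1/H₁) * ε ^ (1/H₁) := by positivity
  have ha₂ : 0 < 2 * q ^ (1/H₂) * ε ^ (1/H₂) := by positivity
  set u := |x.1| / (2 * p ^ (1/H₁) * ε ^ (1/H₁)) with hu
  set v := |x.2| / (2 * q ^ (1/H₂) * ε ^ (1/H₂)) with hv
  have hu0 : 0 ≤ u := by positivity
  have hv0 : 0 ≤ v := by positivity
  have hx1 : |x.1| = u * (2 * p ^ (1/H₁) * ε ^ (1/H₁)) := by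
    rw [hu, div_mul_cancel₀ _ ha₁.ne']
  have hx2 : |x.2| = v * (2 * q ^ (1/H₂) * ε ^ (1/H₂)) := by
    rw [hv, div_mul_cancel₀ _ ha₂.ne']
  have b1 : |x.1| ^ H₁ ≤ (1 - H₁ + H₁ * (2*u)) * (p * ε) := by
    rw [hx1, pow_split p ε H₁ hp0 hε h10 u hu0]
    exact mul_le_mul_of_nonneg_right (bern_aux H₁ (2*u) h10 h11.le (by linarith))
      (by positivity)
  have b2 : |x.2| ^ H₂ ≤ (1 - H₂ + H₂ * (2*v)) * (q * ε) := by
    rw [hx2, pow_split q ε H₂ hq0 hε h20 v hv0]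
    exact mul_le_mul_of_nonneg_right (bern_aux H₂ (2*v) h20 h21.le (by linarith))
      (by positivity)
  have huv : u + v ≤ 1 := hx
  have hpq' : p * ε + q * ε = ε := by rw [← add_mul, hpq, one_mul]
  have hm' : p * H₁ * ε = q * H₂ * ε := by rw [hm]
  have hmv : p * H₁ * ε * v = q * H₂ * ε * v := by rw [hm]
  have h3 : 0 ≤ p * H₁ * ε * (1 - (u + v)) :=
    mul_nonneg (mul_nonneg (mul_nonneg hp0.le h10.le) hε.le) (by linarith)
  nlinarith [b1, b2, hpq', hm', hmv, h3]
end

section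
/- Let H₁,H₂ ∈ (0,1), H = min(H₁,H₂). Suppose that for every ε > 0 the bound P(sup_{t∈[0,1]²}|X(t)| > ε) ≤ 8 exp{−ε²(1−p)/(2(1 + 4p/(2^{2H}(1−p))))}·(e/p)^{2/H} holds for all p ∈ (0,1). Then for every ε > 2, P(sup_{t∈[0,1]²}|X(t)| > ε) ≤ 8 e^{2/H + 1/2} ε^{4/H} exp{−3ε²/(2(4^{1−H}+3))}. -/
lemma key_frac (c x : ℝ) (hc : 0 < c) (hx : 4 < x) :
    -(x*(1-x⁻¹))/(2*(1+4*x⁻¹/(c*(1-x⁻¹)))) ≤ 1/2 + -(3*x)/(2*(4/c+3)) := by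
  have hx0 : 0 < x := by linarith
  have hx1 : 0 < x - 1 := by linarith
  have h1 : 0 < 1 - x⁻¹ := by
    have : x⁻¹ < 1 := by rw [inv_lt_one_iff₀]; right; linarith
    linarith
  have e1 : x*(1-x⁻¹) = x - 1 := by field_simp
  have e2 : 2*(1 + 4*x⁻¹/(c*(1-x⁻¹))) = 2*(c*(x-1)+4)/(c*(x-1)) := by
    field_simp
  have e3 : (1:ℝ)/2 + -(3*x)/(2*(4/c+3)) = ((4+3*c) - 3*x*c)/(2*(4+3*c)) := by
    field_simp
    ring
  rw [e1, e2, e3, div_div_eq_mul_div, div_le_div_iff₀ (by positivity) (by positivity)]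
  nlinarith [mul_pos hc (show (0:ℝ) < x^2 - 4*x by nlinarith), mul_pos hc hc,
    mul_pos (mul_pos hc hx1) hx1, sq_nonneg (x-1)]

theorem stmt12 (H₁ H₂ : ℝ) (hH₁ : H₁ ∈ Set.Ioo (0:ℝ) 1) (hH₂ : H₂ ∈ Set.Ioo (0:ℝ) 1)
    (I : ℝ → ℝ)
    (hI : ∀ ε : ℝ, 0 < ε → ∀ p ∈ Set.Ioo (0:ℝ) 1,
      I ε ≤ 8 * Real.exp (-(ε ^ 2 * (1 - p))
          / (2 * (1 + 4 * p / ((2:ℝ) ^ (2 * min H₁ H₂) * (1 - p)))))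
        * (Real.exp 1 / p) ^ (2 / min H₁ H₂)) :
    ∀ ε : ℝ, 2 < ε →
      I ε ≤ 8 * Real.exp (2 / min H₁ H₂ + 1 / 2) * ε ^ (4 / min H₁ H₂)
        * Real.exp (-(3 * ε ^ 2) / (2 * ((4:ℝ) ^ (1 - min H₁ H₂) + 3))) := by
  set H := min H₁ H₂ with hHdef
  have hH0 : 0 < H := lt_min hH₁.1 hH₂.1
  have hH1 : H < 1 := lt_of_le_of_lt (min_le_left _ _) hH₁.2
  intro ε hε
  have hε0 : 0 < ε := by linarith
  have hx : 4 < ε ^ 2 := by nlinarith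
  have hx0 : (0:ℝ) < ε ^ 2 := by positivity
  set p : ℝ := (ε ^ 2)⁻¹ with hpdef
  have hp0 : 0 < p := inv_pos.mpr hx0
  have hp1 : p < 1 := by
    rw [hpdef, inv_lt_one_iff₀]; right; linarith
  have h := hI ε hε0 p ⟨hp0, hp1⟩
  set c : ℝ := (2:ℝ) ^ (2 * H) with hcdef
  have hc0 : 0 < c := Real.rpow_pos_of_pos (by norm_num) _
  -- 4^(1-H) = 4 / c
  have h24 : ((2:ℝ) ^ (2:ℝ)) = 4 := by
    rw [show (2:ℝ) = ((2:ℕ):ℝ) from by norm_num, Real.rpow_natCast]; norm_num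
  have h4 : (4:ℝ) ^ (1 - H) = 4 / c := by
    calc (4:ℝ) ^ (1 - H) = ((2:ℝ) ^ (2:ℝ)) ^ (1 - H) := by rw [h24]
      _ = (2:ℝ) ^ ((2:ℝ) * (1 - H)) := by rw [← Real.rpow_mul (by norm_num)]
      _ = (2:ℝ) ^ ((2:ℝ)) / (2:ℝ) ^ (2 * H) := by
          rw [show (2:ℝ) * (1 - H) = 2 - 2 * H by ring, Real.rpow_sub (by norm_num)]
      _ = 4 / c := by rw [h24, hcdef]
  -- exponential bound
  have hexp : Real.exp (-(ε ^ 2 * (1 - p)) / (2 * (1 + 4 * p / (c * (1 - p)))))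
      ≤ Real.exp (1/2) * Real.exp (-(3 * ε ^ 2) / (2 * ((4:ℝ) ^ (1 - H) + 3))) := by
    rw [← Real.exp_add, Real.exp_le_exp, h4]
    have := key_frac c (ε ^ 2) hc0 hx
    calc -(ε ^ 2 * (1 - p)) / (2 * (1 + 4 * p / (c * (1 - p))))
        = -(ε ^ 2 * (1 - (ε ^ 2)⁻¹)) / (2 * (1 + 4 * (ε ^ 2)⁻¹ / (c * (1 - (ε ^ 2)⁻¹)))) := by
          rw [hpdef]
      _ ≤ 1/2 + -(3 * ε ^ 2) / (2 * (4 / c + 3)) := this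
  -- power term
  have hpow : (Real.exp 1 / p) ^ (2 / H) = Real.exp (2 / H) * ε ^ (4 / H) := by
    have : Real.exp 1 / p = Real.exp 1 * ε ^ 2 := by
      rw [hpdef, div_eq_mul_inv, inv_inv]
    rw [this, Real.mul_rpow (Real.exp_pos 1).le (by positivity), Real.exp_one_rpow,
      ← Real.rpow_natCast ε 2, ← Real.rpow_mul hε0.le]
    norm_num
    rw [show (2:ℝ) * (2 / H) = 4 / H by ring]
  calc I ε ≤ 8 * Real.exp (-(ε ^ 2 * (1 - p)) / (2 * (1 + 4 * p / (c * (1 - p)))))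
      * (Real.exp 1 / p) ^ (2 / H) := h
    _ ≤ 8 * (Real.exp (1/2) * Real.exp (-(3 * ε ^ 2) / (2 * ((4:ℝ) ^ (1 - H) + 3))))
      * (Real.exp (2 / H) * ε ^ (4 / H)) := by
        rw [hpow]
        apply mul_le_mul_of_nonneg_right _ (by positivity)
        apply mul_le_mul_of_nonneg_left hexp (by norm_num)
    _ = 8 * Real.exp (2 / H + 1 / 2) * ε ^ (4 / H)
        * Real.exp (-(3 * ε ^ 2) / (2 * ((4:ℝ) ^ (1 - H) + 3))) := by
        rw [Real.exp_add]
        ring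
end
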